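/- The quaternion group Q8 of order 8 does not have a basis: there is no finite sequence (b_1,…,b_n) of non-identity elements of Q8 such that every element of Q8 is written uniquely as b_1^{a_1}···b_n^{a_n} with each a_i ∈ {0,…,ord(b_i)−1}. -/

import Mathlib

/-- A sequence `b : Fin n → G` of non-identity elements is a *basis* for the group `G`
if every `g ∈ G` is uniquely of the form `b 0 ^ a 0 * ⋯ * b (n-1) ^ a (n-1)`
with `a i ∈ {0, …, orderOf (b i) - 1}`. -/
def IsGroupBasis {G : Type*} [Group G] {n : ℕ} (b : Fin n → G) : Prop :=
  (∀ i, b i ≠ 1) ∧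
    Function.Bijective (fun a : ∀ i, Fin (orderOf (b i)) =>
      (List.ofFn fun i => b i ^ ((a i : ℕ))).prod)

/-- `G` has a basis. -/
def HasGroupBasis (G : Type*) [Group G] : Prop :=
  ∃ (n : ℕ) (b : Fin n → G), IsGroupBasis b

lemma q8_pow4 : ∀ x : QuaternionGroup 2, x ^ 4 = 1 := by decide

lemma q8_sq : ∀ x : QuaternionGroup 2, x ^ 2 = 1 → x = 1 ∨ x = QuaternionGroup.a 2 := by decide

/-- The quaternion group `Q₈` does not have a basis. -/
theorem quaternionGroup_not_hasGroupBasis : ¬ HasGroupBasis (QuaternionGroup 2) := by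
  rintro ⟨n, b, hne, hbij⟩
  have hcard : ∏ i, orderOf (b i) = 8 := by
    have h := Fintype.card_of_bijective hbij
    simpa [QuaternionGroup.card] using h
  have hord : ∀ i, orderOf (b i) = 2 ∨ orderOf (b i) = 4 := by
    intro i
    have h1 : orderOf (b i) ∣ 4 := orderOf_dvd_of_pow_eq_one (q8_pow4 _)
    have h2 : orderOf (b i) ≠ 1 := by simpa [orderOf_eq_one_iff] using hne i
    have h3 : orderOf (b i) ≤ 4 := Nat.le_of_dvd (by norm_num) h1
    interval_cases h : orderOf (b i) <;> omega
  have hnle : n ≤ 3 := by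
    by_contra h
    have h2 : (2 : ℕ) ^ Finset.univ.card ≤ ∏ i, orderOf (b i) :=
      Finset.pow_card_le_prod Finset.univ (fun i => orderOf (b i)) 2
        (fun i _ => by have := hord i; omega)
    rw [hcard, Finset.card_univ, Fintype.card_fin] at h2
    have h3 : (2:ℕ)^4 ≤ 2^n := Nat.pow_le_pow_right (by norm_num) (by omega)
    omega
  have key : ∀ (x y : ∀ i, Fin (orderOf (b i))), x ≠ y →
      (List.ofFn fun i => b i ^ ((x i : ℕ))).prod = (List.ofFn fun i => b i ^ ((y i : ℕ))).prod
      → False := fun x y hxy he => hxy (hbij.injective he)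
  interval_cases n
  · simp at hcard
  · rcases hord 0 with h | h <;> simp [Fin.prod_univ_one, h] at hcard
  · rw [Fin.prod_univ_two] at hcard
    rcases hord 0 with h0 | h0 <;> rcases hord 1 with h1 | h1 <;>
      rw [h0, h1] at hcard <;> try norm_num at hcard
    · -- orders (2,4): b0 = a 2 = b1^2
      have hb0 : b 0 = QuaternionGroup.a 2 := by
        rcases q8_sq (b 0) (by have hp := pow_orderOf_eq_one (b 0); rwa [h0] at hp) with h | h
        · exact absurd h (hne 0)
        · exact h
      have hb1 : b 1 ^ 2 = QuaternionGroup.a 2 := by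
        rcases q8_sq (b 1 ^ 2) (by rw [← pow_mul]; exact q8_pow4 (b 1)) with h | h
        · exfalso
          have hd : orderOf (b 1) ∣ 2 := orderOf_dvd_of_pow_eq_one h
          rw [h1] at hd; norm_num at hd
        · exact h
      refine key (fun i => ⟨if i = 0 then 1 else 0, ?_⟩) (fun i => ⟨if i = 0 then 0 else 2, ?_⟩)
        ?_ ?_
      · fin_cases i <;> simp [h0, h1]
      · fin_cases i <;> simp [h0, h1]
      · intro h
        have h' := congrFun h 0
        simp [Fin.ext_iff] at h'
      · simp [List.prod_ofFn, Fin.prod_univ_two, hb0, hb1]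
    · -- orders (4,2): b1 = a 2 = b0^2
      have hb1 : b 1 = QuaternionGroup.a 2 := by
        rcases q8_sq (b 1) (by have hp := pow_orderOf_eq_one (b 1); rwa [h1] at hp) with h | h
        · exact absurd h (hne 1)
        · exact h
      have hb0 : b 0 ^ 2 = QuaternionGroup.a 2 := by
        rcases q8_sq (b 0 ^ 2) (by rw [← pow_mul]; exact q8_pow4 (b 0)) with h | h
        · exfalso
          have hd : orderOf (b 0) ∣ 2 := orderOf_dvd_of_pow_eq_one h
          rw [h0] at hd; norm_num at hd
        · exact h
      refine key (fun i => ⟨if i = 0 then 2 else 0, ?_⟩) (fun i => ⟨if i = 0 then 0 else 1, ?_⟩)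
        ?_ ?_
      · fin_cases i <;> simp [h0, h1]
      · fin_cases i <;> simp [h0, h1]
      · intro h
        have h' := congrFun h 0
        simp [Fin.ext_iff] at h'
      · simp [List.prod_ofFn, Fin.prod_univ_two, hb0, hb1]
  · rw [Fin.prod_univ_three] at hcard
    rcases hord 0 with h0 | h0 <;> rcases hord 1 with h1 | h1 <;> rcases hord 2 with hA | hA <;>
      rw [h0, h1, hA] at hcard <;> try norm_num at hcard
    have hb0 : b 0 = QuaternionGroup.a 2 := by
      rcases q8_sq (b 0) (by have hp := pow_orderOf_eq_one (b 0); rwa [h0] at hp) with h | h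
      · exact absurd h (hne 0)
      · exact h
    have hb1 : b 1 = QuaternionGroup.a 2 := by
      rcases q8_sq (b 1) (by have hp := pow_orderOf_eq_one (b 1); rwa [h1] at hp) with h | h
      · exact absurd h (hne 1)
      · exact h
    have hb2 : b 2 = QuaternionGroup.a 2 := by
      rcases q8_sq (b 2) (by have hp := pow_orderOf_eq_one (b 2); rwa [hA] at hp) with h | h
      · exact absurd h (hne 2)
      · exact h
    refine key (fun i => ⟨if i = 2 then 0 else 1, ?_⟩) (fun i => ⟨0, ?_⟩) ?_ ?_
    · fin_cases i <;> simp [h0, h1, hA]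
    · fin_cases i <;> simp [h0, h1, hA]
    · intro h
      have h' := congrFun h 0
      simp [Fin.ext_iff] at h'
    · simp [List.prod_ofFn, Fin.prod_univ_three, hb0, hb1, hb2]
      decide
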